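/- arXiv:2009.08440 — 7 statements merged into one kernel-verified Lean document; each statement's English description precedes it below -/
import Mathlib

section
/- Let d ≥ 2 and let p ∈ ℝ^d be a probability vector with entries sorted in decreasing order p_1 ≥ p_2 ≥ … ≥ p_d ≥ 0. Let M be the real symmetric d×d matrix with entries M_{ij} = δ_{ij} p_i − p_i p_j (i.e., M = diag(p) − p pᵀ). Then the largest eigenvalue λ_max of M satisfies p_2 ≤ λ_max ≤ p_1. -/
open Matrix in
private lemma rayleigh_le_aux (d : ℕ) (A : Matrix (Fin d) (Fin d) ℝ) (hA : A.IsHermitian)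
    (x : Fin d → ℝ) (c : ℝ) (hc : ∀ i, hA.eigenvalues i ≤ c) :
    x ⬝ᵥ (A *ᵥ x) ≤ c * (x ⬝ᵥ x) := by
  classical
  set U : Matrix (Fin d) (Fin d) ℝ := (hA.eigenvectorUnitary : Matrix (Fin d) (Fin d) ℝ) with hU
  set y : Fin d → ℝ := (star U) *ᵥ x with hy
  have hyy : y ⬝ᵥ y = x ⬝ᵥ x := by
    rw [hy, dotProduct_mulVec, ← mulVec_transpose]
    have : (star U)ᵀ = U := by
      ext i j; simp [Matrix.transpose_apply, Matrix.star_apply]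
    rw [this, mulVec_mulVec]
    have : U * star U = 1 := (Matrix.mem_unitaryGroup_iff).mp hA.eigenvectorUnitary.2
    rw [this, one_mulVec]
  have hAx : A *ᵥ x = U *ᵥ ((Matrix.diagonal hA.eigenvalues) *ᵥ y) := by
    conv_lhs => rw [hA.spectral_theorem]
    have : (RCLike.ofReal ∘ hA.eigenvalues : Fin d → ℝ) = hA.eigenvalues := by
      ext i; simp
    rw [this, Unitary.conjStarAlgAut_apply, ← mulVec_mulVec, ← mulVec_mulVec, hy]
  have hform : x ⬝ᵥ (A *ᵥ x) = ∑ i, hA.eigenvalues i * (y i)^2 := by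
    rw [hAx, dotProduct_mulVec, ← mulVec_transpose]
    have hT : Uᵀ = star U := by ext i j; simp [Matrix.transpose_apply, Matrix.star_apply]
    rw [hT, ← hy]
    simp [dotProduct, mulVec_diagonal]
    ring_nf
    exact Finset.sum_congr rfl fun i _ => by ring
  rw [hform, ← hyy]
  have : c * (y ⬝ᵥ y) = ∑ i, c * (y i)^2 := by
    simp [dotProduct, Finset.mul_sum]; exact Finset.sum_congr rfl fun i _ => by ring
  rw [this]
  exact Finset.sum_le_sum fun i _ => mul_le_mul_of_nonneg_right (hc i) (sq_nonneg _)

open Matrix in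
private lemma quadform_aux (d : ℕ) (p : Fin d → ℝ) (x : Fin d → ℝ) :
    x ⬝ᵥ ((Matrix.diagonal p - Matrix.vecMulVec p p) *ᵥ x)
      = (∑ i, p i * (x i)^2) - (∑ i, p i * x i)^2 := by
  rw [Matrix.sub_mulVec, dotProduct_sub]
  congr 1
  · simp [dotProduct, mulVec_diagonal]
    exact Finset.sum_congr rfl fun i _ => by ring
  · have : Matrix.vecMulVec p p *ᵥ x = fun i => p i * (p ⬝ᵥ x) := by
      ext i; simp [Matrix.mulVec, Matrix.vecMulVec_apply, dotProduct, Finset.mul_sum, mul_assoc]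
    rw [this]
    simp [dotProduct, pow_two, Finset.sum_mul]
    exact Finset.sum_congr rfl fun i _ => by ring

private lemma bound_aux (d : ℕ) (p : Fin d → ℝ) (c : ℝ) (v : Fin d → ℝ)
    (hle : ∀ j, p j ≤ c) (hvv : ∑ j, (v j)^2 = 1) :
    (∑ j, p j * (v j)^2) - (∑ j, p j * v j)^2 ≤ c := by
  have h2 : ∑ j, p j * (v j)^2 ≤ c := by
    calc ∑ j, p j * (v j)^2 ≤ ∑ j, c * (v j)^2 :=
          Finset.sum_le_sum fun j _ => mul_le_mul_of_nonneg_right (hle j) (sq_nonneg _)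
      _ = c := by rw [← Finset.mul_sum, hvv, mul_one]
  nlinarith [sq_nonneg (∑ j, p j * v j)]

/-- For a decreasingly sorted probability vector `p ∈ ℝ^d` (`d ≥ 2`),
the largest eigenvalue of the real symmetric matrix `M = diag(p) - p pᵀ` satisfies
`p 1 ≤ λ_max ≤ p 0`. -/
theorem stmt1 (d : ℕ) (hd : 2 ≤ d) (p : Fin d → ℝ)
    (hnonneg : ∀ i, 0 ≤ p i) (hsum : ∑ i, p i = 1)
    (hsorted : ∀ i j : Fin d, i ≤ j → p j ≤ p i)
    (M : Matrix (Fin d) (Fin d) ℝ)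
    (hM : M = Matrix.diagonal p - Matrix.vecMulVec p p)
    (hHerm : M.IsHermitian) :
    p ⟨1, by omega⟩ ≤
      Finset.univ.sup' (Finset.univ_nonempty_iff.mpr ⟨⟨0, by omega⟩⟩) hHerm.eigenvalues ∧
    Finset.univ.sup' (Finset.univ_nonempty_iff.mpr ⟨⟨0, by omega⟩⟩) hHerm.eigenvalues ≤
      p ⟨0, by omega⟩ := by
  classical
  set i0 : Fin d := ⟨0, by omega⟩ with hi0
  set i1 : Fin d := ⟨1, by omega⟩ with hi1
  have hle0 : ∀ i : Fin d, p i ≤ p i0 := fun i => hsorted i0 i (by simp [hi0, Fin.le_def])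
  set c : ℝ := Finset.univ.sup' (Finset.univ_nonempty_iff.mpr ⟨i0⟩) hHerm.eigenvalues with hc
  -- Upper bound: each eigenvalue is ≤ p i0
  have hupper : ∀ i : Fin d, hHerm.eigenvalues i ≤ p i0 := by
    intro i
    obtain ⟨v, hvv, heig⟩ : ∃ v : Fin d → ℝ, (∑ j, (v j)^2 = 1) ∧
        hHerm.eigenvalues i = dotProduct v (M.mulVec v) := by
      refine ⟨_, ?_, by simpa only [star_trivial, RCLike.re_to_real] using
        hHerm.eigenvalues_eq i⟩
      have h1 : (inner ℝ (hHerm.eigenvectorBasis i) (hHerm.eigenvectorBasis i) : ℝ) = 1 := by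
        rw [real_inner_self_eq_norm_sq, hHerm.eigenvectorBasis.orthonormal.1 i]; norm_num
      rw [PiLp.inner_apply] at h1
      simpa [pow_two] using h1
    replace heig := heig.trans (by rw [hM])
    rw [quadform_aux] at heig
    rw [heig]
    exact bound_aux d p (p i0) v hle0 hvv
  constructor
  · -- Lower bound via test vector
    have hp0pos : 0 < p i0 := by
      by_contra h
      push_neg at h
      have hz : ∀ i, p i = 0 := fun i => le_antisymm (le_trans (hle0 i) h) (hnonneg i)
      simp [hz] at hsum
    set x : Fin d → ℝ := fun i => if i = i0 then p i1 else if i = i1 then -(p i0) else 0 with hx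
    have hne : i0 ≠ i1 := by simp [hi0, hi1, Fin.ext_iff]
    have hsum2 : ∀ f : Fin d → ℝ, (∀ i, i ≠ i0 → i ≠ i1 → f i = 0) →
        ∑ i, f i = f i0 + f i1 := by
      intro f hf
      rw [← Finset.sum_subset (Finset.subset_univ ({i0, i1} : Finset (Fin d)))]
      · rw [Finset.sum_pair hne]
      · intro i _ hi
        simp only [Finset.mem_insert, Finset.mem_singleton, not_or] at hi
        exact hf i hi.1 hi.2
    have hpx : ∑ i, p i * x i = 0 := by
      rw [hsum2 _ (fun i h1 h2 => by simp [hx, h1, h2])]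
      simp [hx, hne, hne.symm]; ring
    have hpx2 : ∑ i, p i * (x i)^2 = p i0 * (p i1)^2 + p i1 * (p i0)^2 := by
      rw [hsum2 _ (fun i h1 h2 => by simp [hx, h1, h2])]
      simp [hx, hne, hne.symm]
    have hxx : dotProduct x x = (p i1)^2 + (p i0)^2 := by
      unfold dotProduct
      rw [hsum2 _ (fun i h1 h2 => by simp [hx, h1, h2])]
      simp [hx, hne, hne.symm]; ring
    have hray : dotProduct x (M.mulVec x) ≤ c * dotProduct x x :=
      rayleigh_le_aux d M hHerm x c fun i => Finset.le_sup' _ (Finset.mem_univ i)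
    rw [hM] at hray
    rw [show dotProduct x ((Matrix.diagonal p - Matrix.vecMulVec p p).mulVec x)
        = (∑ i, p i * (x i)^2) - (∑ i, p i * x i)^2 from quadform_aux d p x] at hray
    rw [hpx, hpx2, hxx] at hray
    have hp1 : 0 ≤ p i1 := hnonneg i1
    have hp10 : p i1 ≤ p i0 := hle0 i1
    nlinarith [sq_nonneg (p i1), sq_nonneg (p i0), mul_pos hp0pos hp0pos]
  · exact Finset.sup'_le _ _ fun i _ => hupper i
end

section
/- Let ρ be a d×d complex positive semidefinite matrix with trace 1, with orthonormal eigenbasis {|i⟩}_{i=1}^d and eigenvalues p_i ≥ 0, and let H be a d×d Hermitian matrix with matrix elements H_{ij} = ⟨i|H|j⟩. Define D := 2 Σ_{i≠j, p_i+p_j>0} (p_i p_j / (p_i + p_j)) |H_{ij}|² + [Σ_i p_i H_{ii}² − (Σ_i p_i H_{ii})²]. Then D ≥ 0, and D = 0 if and only if Π H Π = c Π for some real constant c, where Π = Σ_{i : p_i > 0} |i⟩⟨i| is the orthogonal projector onto the support of ρ. Equivalently, D = 0 if and only if H_{ij} = 0 for all i ≠ j with p_i > 0 and p_j > 0, and H_{ii}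 is constant over all i with p_i > 0. -/
open scoped ComplexOrder

/-- The matrix element `⟨u|H|w⟩` of a matrix `H` between vectors `u` and `w` in `ℂ^d`. -/
noncomputable def matElem {d : ℕ} (H : Matrix (Fin d) (Fin d) ℂ) (u w : Fin d → ℂ) : ℂ :=
  dotProduct (star u) (H.mulVec w)

/-- The gap `D = Var[ρ,H] − (1/4) F_Q[ρ,H]`, written in terms of the eigenvalues `p`
and orthonormal eigenvectors `v` of `ρ`. -/
noncomputable def gapD {d : ℕ} (p : Fin d → ℝ) (v : Fin d → Fin d → ℂ)
    (H : Matrix (Fin d) (Fin d) ℂ) : ℝ :=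
  2 * ∑ i, ∑ j,
      (if i ≠ j ∧ 0 < p i + p j then
        p i * p j / (p i + p j) * (‖matElem H (v i) (v j)‖) ^ 2
      else 0) +
    ((∑ i, p i * ((matElem H (v i) (v i)).re) ^ 2) -
      (∑ i, p i * (matElem H (v i) (v i)).re) ^ 2)

/-- The orthogonal projector `Π = Σ_{i : p i > 0} |v i⟩⟨v i|` onto the support of `ρ`. -/
noncomputable def suppProj {d : ℕ} (p : Fin d → ℝ) (v : Fin d → Fin d → ℂ) :
    Matrix (Fin d) (Fin d) ℂ :=
  ∑ i ∈ Finset.univ.filter (fun i => 0 < p i), Matrix.vecMulVec (v i) (star (v i))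

/- ---------- auxiliary lemmas ---------- -/

lemma matElem_star {d : ℕ} (H : Matrix (Fin d) (Fin d) ℂ) (hH : H.IsHermitian)
    (u w : Fin d → ℂ) : star (matElem H u w) = matElem H w u := by
  simp only [matElem, dotProduct, Matrix.mulVec, dotProduct,
    star_sum, star_mul', star_star, Pi.star_apply, Finset.mul_sum, Finset.sum_mul]
  rw [Finset.sum_comm]
  refine Finset.sum_congr rfl fun i _ => Finset.sum_congr rfl fun j _ => ?_
  have : star (H j i) = H i j := by
    conv_rhs => rw [← hH]
    simp [Matrix.conjTranspose_apply]
  rw [this]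
  ring

lemma matElem_smul {d : ℕ} (M : Matrix (Fin d) (Fin d) ℂ) (c : ℂ) (u w : Fin d → ℂ) :
    matElem (c • M) u w = c * matElem M u w := by
  simp [matElem, Matrix.smul_mulVec, dotProduct_smul]

lemma suppProj_mulVec {d : ℕ} (p : Fin d → ℝ) (v : Fin d → Fin d → ℂ) (y : Fin d → ℂ) :
    (suppProj p v).mulVec y
      = ∑ i ∈ Finset.univ.filter (fun i => 0 < p i),
          (dotProduct (star (v i)) y) • v i := by
  funext k
  simp only [suppProj, Matrix.mulVec, dotProduct, Finset.sum_apply,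
    Matrix.sum_apply, Matrix.vecMulVec_apply, Pi.star_apply, Finset.sum_mul,
    Pi.smul_apply, smul_eq_mul, Finset.mul_sum]
  rw [Finset.sum_comm]
  refine Finset.sum_congr rfl fun i _ => Finset.sum_congr rfl fun m _ => ?_
  ring

lemma dot_sum_smul {d : ℕ} (v : Fin d → Fin d → ℂ)
    (hortho : ∀ i j, dotProduct (star (v i)) (v j) = if i = j then 1 else 0)
    (s : Finset (Fin d)) (c : Fin d → ℂ) (k : Fin d) (hk : k ∈ s) :
    dotProduct (star (v k)) (∑ i ∈ s, c i • v i) = c k := by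
  have expand : dotProduct (star (v k)) (∑ i ∈ s, c i • v i)
      = ∑ i ∈ s, c i * dotProduct (star (v k)) (v i) := by
    simp only [dotProduct, Finset.sum_apply, Pi.smul_apply, smul_eq_mul,
      Finset.mul_sum, Pi.star_apply]
    rw [Finset.sum_comm]
    exact Finset.sum_congr rfl fun i _ => Finset.sum_congr rfl fun m _ => by ring
  rw [expand, Finset.sum_eq_single k]
  · rw [hortho k k, if_pos rfl, mul_one]
  · intro i _ hik
    rw [hortho k i, if_neg (fun h => hik h.symm), mul_zero]
  · intro h; exact absurd hk h

lemma suppProj_mulVec_self {d : ℕ} (p : Fin d → ℝ) (v : Fin d → Fin d → ℂ)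
    (hortho : ∀ i j, dotProduct (star (v i)) (v j) = if i = j then 1 else 0)
    (l : Fin d) (hl : 0 < p l) :
    (suppProj p v).mulVec (v l) = v l := by
  rw [suppProj_mulVec, Finset.sum_eq_single l]
  · rw [hortho l l, if_pos rfl, one_smul]
  · intro i _ hil; rw [hortho i l, if_neg hil, zero_smul]
  · intro h; exact absurd (by simp [hl] : l ∈ Finset.univ.filter (fun i => 0 < p i)) h

lemma matElem_sandwich {d : ℕ} (p : Fin d → ℝ) (v : Fin d → Fin d → ℂ)
    (H : Matrix (Fin d) (Fin d) ℂ)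
    (hortho : ∀ i j, dotProduct (star (v i)) (v j) = if i = j then 1 else 0)
    (k l : Fin d) (hk : 0 < p k) (hl : 0 < p l) :
    matElem (suppProj p v * H * suppProj p v) (v k) (v l) = matElem H (v k) (v l) := by
  have hkS : k ∈ Finset.univ.filter (fun i => 0 < p i) := by simp [hk]
  unfold matElem
  rw [← Matrix.mulVec_mulVec, ← Matrix.mulVec_mulVec,
    suppProj_mulVec_self p v hortho l hl, suppProj_mulVec,
    dot_sum_smul v hortho _ _ k hkS]

lemma matElem_suppProj {d : ℕ} (p : Fin d → ℝ) (v : Fin d → Fin d → ℂ)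
    (hortho : ∀ i j, dotProduct (star (v i)) (v j) = if i = j then 1 else 0)
    (k l : Fin d) (hl : 0 < p l) :
    matElem (suppProj p v) (v k) (v l) = if k = l then 1 else 0 := by
  unfold matElem
  rw [suppProj_mulVec_self p v hortho l hl, hortho k l]

lemma proj_sandwich_single {d : ℕ} (H : Matrix (Fin d) (Fin d) ℂ) (a b : Fin d → ℂ) :
    Matrix.vecMulVec a (star a) * H * Matrix.vecMulVec b (star b)
      = matElem H a b • Matrix.vecMulVec a (star b) := by
  ext k l
  simp only [Matrix.mul_apply, Matrix.vecMulVec_apply, Pi.star_apply, matElem,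
    dotProduct, Matrix.mulVec, Matrix.smul_apply, smul_eq_mul,
    Finset.sum_mul, Finset.mul_sum]
  rw [Finset.sum_comm]
  refine Finset.sum_congr rfl fun n _ => Finset.sum_congr rfl fun m _ => ?_
  ring

lemma sandwich_decomp {d : ℕ} (p : Fin d → ℝ) (v : Fin d → Fin d → ℂ)
    (H : Matrix (Fin d) (Fin d) ℂ) :
    suppProj p v * H * suppProj p v
      = ∑ i ∈ Finset.univ.filter (fun i => 0 < p i),
          ∑ j ∈ Finset.univ.filter (fun i => 0 < p i),
            matElem H (v i) (v j) • Matrix.vecMulVec (v i) (star (v j)) := by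
  unfold suppProj
  rw [Finset.sum_mul, Finset.sum_mul]
  refine Finset.sum_congr rfl fun i _ => ?_
  rw [Finset.mul_sum]
  exact Finset.sum_congr rfl fun j _ => proj_sandwich_single H (v i) (v j)

/-- For a density matrix `ρ = Σ_i p i |v i⟩⟨v i|` (positive semidefinite,
trace one, with orthonormal eigenbasis `v` and eigenvalues `p i ≥ 0`) and a Hermitian
matrix `H`, the gap `D ≥ 0`, and `D = 0` iff `Π H Π = c Π` for some real `c`, iff the
off-diagonal elements of `H` on the support vanish and the diagonal elements on the
support are constant. -/
theorem stmt5 (d : ℕ) (p : Fin d → ℝ) (v : Fin d → Fin d → ℂ)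
    (ρ H : Matrix (Fin d) (Fin d) ℂ)
    (hρ : ρ.PosSemidef) (htr : ρ.trace = 1)
    (hortho : ∀ i j, dotProduct (star (v i)) (v j) = if i = j then 1 else 0)
    (hp : ∀ i, 0 ≤ p i)
    (hspec : ρ = ∑ i, (p i : ℂ) • Matrix.vecMulVec (v i) (star (v i)))
    (hH : H.IsHermitian) :
    0 ≤ gapD p v H ∧
    (gapD p v H = 0 ↔
      ∃ c : ℝ, suppProj p v * H * suppProj p v = (c : ℂ) • suppProj p v) ∧
    (gapD p v H = 0 ↔
      (∀ i j, i ≠ j → 0 < p i → 0 < p j → matElem H (v i) (v j) = 0) ∧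
      (∀ i j, 0 < p i → 0 < p j → matElem H (v i) (v i) = matElem H (v j) (v j))) := by
  -- total probability one
  have hsum : ∑ i, p i = 1 := by
    rw [hspec, Matrix.trace_sum] at htr
    have key : ∀ i : Fin d,
        ((p i : ℂ) • Matrix.vecMulVec (v i) (star (v i))).trace = (p i : ℂ) := by
      intro i
      rw [Matrix.trace_smul]
      have h1 : (Matrix.vecMulVec (v i) (star (v i))).trace = 1 := by
        have h := hortho i i
        rw [if_pos rfl] at h
        rw [← h]
        simp [Matrix.trace, Matrix.diag, Matrix.vecMulVec_apply, dotProduct, mul_comm]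
      rw [h1, smul_eq_mul, mul_one]
    rw [Finset.sum_congr rfl fun i _ => key i] at htr
    have : ((∑ i, p i : ℝ) : ℂ) = ((1 : ℝ) : ℂ) := by push_cast; simpa using htr
    exact_mod_cast this
  -- diagonal elements are real
  have hIm : ∀ i, (matElem H (v i) (v i)).im = 0 := by
    intro i
    have h := matElem_star H hH (v i) (v i)
    rw [Complex.star_def] at h
    exact (Complex.conj_eq_iff_im.mp h)
  set h : Fin d → ℝ := fun i => (matElem H (v i) (v i)).re with hh
  set m : ℝ := ∑ i, p i * h i with hm
  -- variance identity
  have hvar : (∑ i, p i * h i ^ 2) - (∑ i, p i * h i) ^ 2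
      = ∑ i, p i * (h i - m) ^ 2 := by
    have expand : ∀ i : Fin d,
        p i * (h i - m) ^ 2 = p i * h i ^ 2 - 2 * m * (p i * h i) + m ^ 2 * p i :=
      fun i => by ring
    rw [Finset.sum_congr rfl fun i _ => expand i]
    rw [Finset.sum_add_distrib, Finset.sum_sub_distrib, ← Finset.mul_sum, ← Finset.mul_sum,
      hsum, ← hm]
    ring
  -- abbreviation for off-diagonal terms
  set A : Fin d → Fin d → ℝ := fun i j =>
    if i ≠ j ∧ 0 < p i + p j then
      p i * p j / (p i + p j) * (‖matElem H (v i) (v j)‖) ^ 2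
    else 0 with hA
  have hA_nonneg : ∀ i j, 0 ≤ A i j := by
    intro i j
    rw [hA]
    dsimp only
    split
    · next hc =>
      have := hp i; have := hp j
      positivity
    · exact le_refl 0
  have hD : gapD p v H = 2 * (∑ i, ∑ j, A i j) + ∑ i, p i * (h i - m) ^ 2 := by
    rw [gapD, ← hvar]
  have hdiag_nonneg : ∀ i : Fin d, 0 ≤ p i * (h i - m) ^ 2 := by
    intro i; have := hp i; positivity
  have hsumA_nonneg : 0 ≤ ∑ i, ∑ j, A i j :=
    Finset.sum_nonneg fun i _ => Finset.sum_nonneg fun j _ => hA_nonneg i j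
  have hsumdiag_nonneg : 0 ≤ ∑ i, p i * (h i - m) ^ 2 :=
    Finset.sum_nonneg fun i _ => hdiag_nonneg i
  have hnonneg : 0 ≤ gapD p v H := by rw [hD]; linarith
  -- the main equivalence : gapD = 0 ↔ condition C
  have hCiff : gapD p v H = 0 ↔
      (∀ i j, i ≠ j → 0 < p i → 0 < p j → matElem H (v i) (v j) = 0) ∧
      (∀ i j, 0 < p i → 0 < p j → matElem H (v i) (v i) = matElem H (v j) (v j)) := by
    constructor
    · intro h0
      rw [hD] at h0
      have hA0 : ∑ i, ∑ j, A i j = 0 := by linarith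
      have hd0 : ∑ i, p i * (h i - m) ^ 2 = 0 := by linarith
      have hAz : ∀ i j : Fin d, A i j = 0 := by
        intro i j
        have h1 := (Finset.sum_eq_zero_iff_of_nonneg
          (fun i _ => Finset.sum_nonneg fun j _ => hA_nonneg i j)).mp hA0 i (Finset.mem_univ i)
        exact (Finset.sum_eq_zero_iff_of_nonneg (fun j _ => hA_nonneg i j)).mp h1 j
          (Finset.mem_univ j)
      have hdz : ∀ i : Fin d, p i * (h i - m) ^ 2 = 0 := fun i =>
        (Finset.sum_eq_zero_iff_of_nonneg (fun i _ => hdiag_nonneg i)).mp hd0 i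
          (Finset.mem_univ i)
      constructor
      · intro i j hij hpi hpj
        have hz := hAz i j
        rw [hA] at hz
        dsimp only at hz
        rw [if_pos ⟨hij, by linarith⟩] at hz
        have hcoef : 0 < p i * p j / (p i + p j) := by positivity
        have habs : (‖matElem H (v i) (v j)‖) ^ 2 = 0 := by
          rcases mul_eq_zero.mp hz with h' | h'
          · exact absurd h' (ne_of_gt hcoef)
          · exact h'
        have : ‖matElem H (v i) (v j)‖ = 0 := by
          exact pow_eq_zero_iff (two_ne_zero) |>.mp habs
        exact norm_eq_zero.mp this
      · intro i j hpi hpj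
        have hi : h i = m := by
          have hz := hdz i
          rcases mul_eq_zero.mp hz with h' | h'
          · exact absurd h' (ne_of_gt hpi)
          · have := pow_eq_zero_iff (two_ne_zero) |>.mp h'
            linarith
        have hj : h j = m := by
          have hz := hdz j
          rcases mul_eq_zero.mp hz with h' | h'
          · exact absurd h' (ne_of_gt hpj)
          · have := pow_eq_zero_iff (two_ne_zero) |>.mp h'
            linarith
        apply Complex.ext
        · show h i = h j
          rw [hi, hj]
        · rw [hIm i, hIm j]
    · rintro ⟨hoff, hdiag⟩
      rw [hD]
      have hAz : ∀ i j : Fin d, A i j = 0 := by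
        intro i j
        rw [hA]
        dsimp only
        split
        · next hc =>
          obtain ⟨hij, hpos⟩ := hc
          by_cases hpi : 0 < p i
          · by_cases hpj : 0 < p j
            · rw [hoff i j hij hpi hpj]
              simp
            · have : p j = 0 := le_antisymm (not_lt.mp hpj) (hp j)
              rw [this]
              ring
          · have : p i = 0 := le_antisymm (not_lt.mp hpi) (hp i)
            rw [this]
            ring
        · rfl
      have hdz : ∀ i : Fin d, p i * (h i - m) ^ 2 = 0 := by
        intro i
        by_cases hpi : 0 < p i
        · have hmi : m = h i := by
            rw [hm]
            have : ∀ j : Fin d, p j * h j = p j * h i := by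
              intro j
              by_cases hpj : 0 < p j
              · have := hdiag j i hpj hpi
                have hre : h j = h i := congrArg Complex.re this
                rw [hre]
              · have : p j = 0 := le_antisymm (not_lt.mp hpj) (hp j)
                rw [this]; ring
            rw [Finset.sum_congr rfl fun j _ => this j, ← Finset.sum_mul, hsum, one_mul]
          rw [hmi]
          ring
        · have : p i = 0 := le_antisymm (not_lt.mp hpi) (hp i)
          rw [this]; ring
      rw [Finset.sum_congr rfl fun i _ => Finset.sum_congr rfl fun j _ => hAz i j,
        Finset.sum_congr rfl fun i _ => hdz i]
      simp
  -- support is nonempty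
  have hex : ∃ i, 0 < p i := by
    by_contra hc
    push_neg at hc
    have : ∀ i : Fin d, p i = 0 := fun i => le_antisymm (hc i) (hp i)
    rw [Finset.sum_congr rfl fun i _ => this i] at hsum
    simp at hsum
  -- equivalence with projector condition
  have hPiff : ((∀ i j, i ≠ j → 0 < p i → 0 < p j → matElem H (v i) (v j) = 0) ∧
      (∀ i j, 0 < p i → 0 < p j → matElem H (v i) (v i) = matElem H (v j) (v j))) ↔
      ∃ c : ℝ, suppProj p v * H * suppProj p v = (c : ℂ) • suppProj p v := by
    constructor
    · rintro ⟨hoff, hdiag⟩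
      obtain ⟨i0, hi0⟩ := hex
      refine ⟨h i0, ?_⟩
      have hdiagc : ∀ i, 0 < p i → matElem H (v i) (v i) = ((h i0 : ℝ) : ℂ) := by
        intro i hpi
        have := hdiag i i0 hpi hi0
        apply Complex.ext
        · show h i = h i0
          exact congrArg Complex.re this
        · rw [hIm i]
          simp
      rw [sandwich_decomp]
      have step : ∀ i ∈ Finset.univ.filter (fun i => 0 < p i),
          (∑ j ∈ Finset.univ.filter (fun i => 0 < p i),
            matElem H (v i) (v j) • Matrix.vecMulVec (v i) (star (v j)))
          = ((h i0 : ℝ) : ℂ) • Matrix.vecMulVec (v i) (star (v i)) := by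
        intro i hiS
        have hpi : 0 < p i := (Finset.mem_filter.mp hiS).2
        rw [Finset.sum_eq_single i]
        · rw [hdiagc i hpi]
        · intro j hjS hji
          have hpj : 0 < p j := (Finset.mem_filter.mp hjS).2
          rw [hoff i j (fun e => hji e.symm) hpi hpj, zero_smul]
        · intro hni; exact absurd hiS hni
      rw [Finset.sum_congr rfl step, suppProj, Finset.smul_sum]
    · rintro ⟨c, hc⟩
      constructor
      · intro i j hij hpi hpj
        have := matElem_sandwich p v H hortho i j hpi hpj
        rw [hc, matElem_smul, matElem_suppProj p v hortho i j hpj, if_neg hij,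
          mul_zero] at this
        exact this.symm
      · intro i j hpi hpj
        have h1 := matElem_sandwich p v H hortho i i hpi hpi
        rw [hc, matElem_smul, matElem_suppProj p v hortho i i hpi, if_pos rfl,
          mul_one] at h1
        have h2 := matElem_sandwich p v H hortho j j hpj hpj
        rw [hc, matElem_smul, matElem_suppProj p v hortho j j hpj, if_pos rfl,
          mul_one] at h2
        rw [← h1, ← h2]
  exact ⟨hnonneg, hCiff.trans hPiff, hCiff⟩
end

section
/- Let ρ be a d×d complex positive semidefinite matrix with tr ρ = 1 and let H be a d×d Hermitian matrix. Let {u_k}_{k=1}^d be an orthonormal basis of ℂ^d such that ⟨u_k| (√ρ H √ρ − tr(ρH) ρ) |u_k⟩ = 0 for every k. Define q_k := ⟨u_k| ρ |u_k⟩ and w_k := √ρ u_k (so that ‖w_k‖² = q_k and Σ_k |w_k⟩⟨w_k| = ρ). Then: (i) ⟨w_k| H |w_k⟩ = q_k · tr(ρH) for every k; and (ii) for the normalised vectors ψ_k := w_k/√q_k defined whenever q_k > 0, one has Σ_{k : q_k>0} q_k (⟨ψ_k|H²|ψ_k⟩ − ⟨ψ_k|H|ψ_k⟩²) = tr(ρH²)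 − tr(ρH)². -/
open scoped ComplexOrder

/-- The square root of a positive semidefinite matrix, as `Matrix.PosSemidef.sqrt` was defined
in older Mathlib (removed since). -/
noncomputable def Matrix.PosSemidef.sqrt {n : Type*} [Fintype n] [DecidableEq n]
    {A : Matrix n n ℂ} (hA : A.PosSemidef) : Matrix n n ℂ :=
  hA.1.eigenvectorUnitary.1 * Matrix.diagonal ((↑) ∘ (√·) ∘ hA.1.eigenvalues) *
    (star hA.1.eigenvectorUnitary : Matrix n n ℂ)

theorem stmt7_sqrt_isHermitian {n : Type*} [Fintype n] [DecidableEq n]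
    {A : Matrix n n ℂ} (hA : A.PosSemidef) : hA.sqrt.IsHermitian := by
  unfold Matrix.PosSemidef.sqrt Matrix.IsHermitian
  simp [Matrix.conjTranspose_mul, Matrix.mul_assoc, Matrix.diagonal_conjTranspose, Matrix.star_eq_conjTranspose]
  have hs : star (Complex.ofReal ∘ (fun x => √x) ∘ hA.1.eigenvalues) =
      Complex.ofReal ∘ (fun x => √x) ∘ hA.1.eigenvalues := by
    funext i; simp
  rw [hs]

theorem stmt7_sqrt_mul_self {n : Type*} [Fintype n] [DecidableEq n]
    {A : Matrix n n ℂ} (hA : A.PosSemidef) : hA.sqrt * hA.sqrt = A := by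
  have hU : (star hA.1.eigenvectorUnitary : Matrix n n ℂ) * hA.1.eigenvectorUnitary.1 = 1 :=
    Unitary.coe_star_mul_self _
  have hD : Matrix.diagonal ((↑) ∘ (√·) ∘ hA.1.eigenvalues) *
      Matrix.diagonal ((↑) ∘ (√·) ∘ hA.1.eigenvalues) =
      Matrix.diagonal (RCLike.ofReal ∘ hA.1.eigenvalues : n → ℂ) := by
    rw [Matrix.diagonal_mul_diagonal]
    congr 1; funext i
    simp only [Function.comp_apply]
    rw [← Complex.ofReal_mul, Real.mul_self_sqrt (hA.eigenvalues_nonneg i)]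
    rfl
  unfold Matrix.PosSemidef.sqrt
  conv_rhs => rw [hA.1.spectral_theorem]
  rw [Unitary.conjStarAlgAut_apply, ← hD]
  simp only [Matrix.mul_assoc]
  rw [← Matrix.mul_assoc (star hA.1.eigenvectorUnitary : Matrix n n ℂ), hU, Matrix.one_mul]

/-- The variance `⟨ψ|H²|ψ⟩ − ⟨ψ|H|ψ⟩²` of a Hermitian observable `H` in a pure state `ψ`. -/
noncomputable def pureVar {d : ℕ} (H : Matrix (Fin d) (Fin d) ℂ) (ψ : Fin d → ℂ) : ℝ :=
  (dotProduct (star ψ) ((H * H).mulVec ψ)).re -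
    ((dotProduct (star ψ) (H.mulVec ψ)).re) ^ 2

/-- Given a density matrix `ρ`, a Hermitian `H`, and an orthonormal basis
`u` of `ℂ^d` on which the diagonal elements of `√ρ H √ρ − tr(ρH) ρ` vanish, the vectors
`w k = √ρ (u k)` satisfy `‖w k‖² = q k`, `Σ_k |w k⟩⟨w k| = ρ`,
`⟨w k|H|w k⟩ = q k · tr(ρH)`, and the normalised states `ψ k = w k / √(q k)` (for
`q k > 0`) form an ensemble whose average variance equals the variance of `ρ`. -/
theorem stmt7 (d : ℕ) (ρ H : Matrix (Fin d) (Fin d) ℂ)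
    (hρ : ρ.PosSemidef) (htr : ρ.trace = 1) (hH : H.IsHermitian)
    (u : Fin d → Fin d → ℂ)
    (hortho : ∀ k l, dotProduct (star (u k)) (u l) = if k = l then 1 else 0)
    (hdiag : ∀ k, dotProduct (star (u k))
      ((hρ.sqrt * H * hρ.sqrt - (ρ * H).trace • ρ).mulVec (u k)) = 0)
    (q : Fin d → ℝ)
    (hq : ∀ k, q k = (dotProduct (star (u k)) (ρ.mulVec (u k))).re)
    (w : Fin d → Fin d → ℂ)
    (hw : ∀ k, w k = hρ.sqrt.mulVec (u k)) :
    (∀ k, dotProduct (star (w k)) (w k) = (q k : ℂ)) ∧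
    (∑ k, Matrix.vecMulVec (w k) (star (w k)) = ρ) ∧
    (∀ k, dotProduct (star (w k)) (H.mulVec (w k)) = (q k : ℂ) * (ρ * H).trace) ∧
    (∑ k ∈ Finset.univ.filter (fun k => 0 < q k),
        q k * pureVar H ((((Real.sqrt (q k))⁻¹ : ℝ) : ℂ) • w k) =
      (ρ * H * H).trace.re - ((ρ * H).trace.re) ^ 2) := by
  set S := hρ.sqrt with hS
  have hSherm : S.IsHermitian := stmt7_sqrt_isHermitian hρ
  have hsq : S * S = ρ := stmt7_sqrt_mul_self hρ
  -- key conjugation lemma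
  have key : ∀ (A : Matrix (Fin d) (Fin d) ℂ) k,
      dotProduct (star (w k)) (A.mulVec (w k)) =
      dotProduct (star (u k)) ((S * A * S).mulVec (u k)) := by
    intro A k
    rw [hw, Matrix.star_mulVec, hSherm.eq, Matrix.mulVec_mulVec,
      ← Matrix.dotProduct_mulVec, Matrix.mulVec_mulVec, ← Matrix.mul_assoc]
  -- realness / nonnegativity of q
  have hqc : ∀ k, dotProduct (star (u k)) (ρ.mulVec (u k)) = (q k : ℂ) := by
    intro k
    have h := hρ.dotProduct_mulVec_nonneg (u k)
    rw [Complex.nonneg_iff] at h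
    rw [hq]
    exact Complex.ext (by simp) (by simp [← h.2])
  have hq0 : ∀ k, 0 ≤ q k := by
    intro k
    have h := hρ.dotProduct_mulVec_nonneg (u k)
    rw [Complex.nonneg_iff] at h
    rw [hq]; exact h.1
  -- part 1
  have part1 : ∀ k, dotProduct (star (w k)) (w k) = (q k : ℂ) := by
    intro k
    have := key 1 k
    simpa [Matrix.one_mulVec, hsq, hqc k] using this
  -- the basis matrix
  set U := (Matrix.of (fun i k => u k i) : Matrix (Fin d) (Fin d) ℂ) with hU
  have hUl : U.conjTranspose * U = 1 := by
    ext k l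
    have := hortho k l
    simpa [Matrix.mul_apply, Matrix.conjTranspose_apply, Matrix.one_apply, hU,
      dotProduct] using this
  have hUr : U * U.conjTranspose = 1 := mul_eq_one_comm.mp hUl
  -- trace formula
  have htrace : ∀ A : Matrix (Fin d) (Fin d) ℂ,
      ∑ k, dotProduct (star (u k)) (A.mulVec (u k)) = A.trace := by
    intro A
    have h1 : (U.conjTranspose * A * U).trace = ∑ k, dotProduct (star (u k)) (A.mulVec (u k)) := by
      simp only [Matrix.trace, Matrix.diag, Matrix.mul_apply, Matrix.conjTranspose_apply,
        dotProduct, Matrix.mulVec, dotProduct, hU, Matrix.of_apply,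
        Pi.star_apply, Finset.sum_mul, Finset.mul_sum]
      congr 1; ext k
      rw [Finset.sum_comm]
      congr 1; ext i
      congr 1; ext j
      ring
    rw [← h1, Matrix.trace_mul_cycle, hUr, Matrix.one_mul]
  -- part 2
  have part2 : ∑ k, Matrix.vecMulVec (w k) (star (w k)) = ρ := by
    have h2 : ∑ k, Matrix.vecMulVec (w k) (star (w k)) = (S * U) * (S * U).conjTranspose := by
      ext i j
      rw [Matrix.sum_apply]
      refine Finset.sum_congr rfl fun k _ => ?_
      simp [Matrix.vecMulVec_apply, Matrix.mul_apply, Matrix.conjTranspose_apply, hw,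
        Matrix.mulVec, dotProduct, hU]
    rw [h2, Matrix.conjTranspose_mul, Matrix.mul_assoc, ← Matrix.mul_assoc U,
      hUr, Matrix.one_mul, hSherm.eq, hsq]
  -- part 3
  have part3 : ∀ k, dotProduct (star (w k)) (H.mulVec (w k)) = (q k : ℂ) * (ρ * H).trace := by
    intro k
    have hd := hdiag k
    rw [Matrix.sub_mulVec, dotProduct_sub, sub_eq_zero] at hd
    rw [key H k, hd, Matrix.smul_mulVec, dotProduct_smul, smul_eq_mul, hqc k]
    ring
  refine ⟨part1, part2, part3, ?_⟩
  -- part 4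
  set t := (ρ * H).trace with ht
  have hwzero : ∀ k, q k = 0 → w k = 0 := by
    intro k hk
    have := part1 k
    rw [hk] at this
    simpa using dotProduct_star_self_eq_zero.mp (by simpa using this)
  have hterm : ∀ k, 0 < q k →
      q k * pureVar H ((((Real.sqrt (q k))⁻¹ : ℝ) : ℂ) • w k) =
      (dotProduct (star (w k)) ((H * H).mulVec (w k))).re - q k * (t.re) ^ 2 := by
    intro k hk
    have hsqrt : ((Real.sqrt (q k))⁻¹ : ℝ) * ((Real.sqrt (q k))⁻¹ : ℝ) = (q k)⁻¹ := by
      rw [← mul_inv, Real.mul_self_sqrt (le_of_lt hk)]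
    set c : ℂ := (((Real.sqrt (q k))⁻¹ : ℝ) : ℂ) with hc
    have hcc : c * c = ((q k)⁻¹ : ℝ) := by
      rw [hc, ← Complex.ofReal_mul, hsqrt]
    have hstar : star (c • w k) = c • star (w k) := by
      rw [star_smul, hc, Complex.star_def, Complex.conj_ofReal]
    have hdp : ∀ A : Matrix (Fin d) (Fin d) ℂ,
        dotProduct (star (c • w k)) (A.mulVec (c • w k)) =
        (((q k)⁻¹ : ℝ) : ℂ) * dotProduct (star (w k)) (A.mulVec (w k)) := by
      intro A
      rw [hstar, Matrix.mulVec_smul, smul_dotProduct, dotProduct_smul,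
        smul_eq_mul, smul_eq_mul, ← mul_assoc, hcc]
    unfold pureVar
    rw [hdp (H * H), hdp H, part3 k]
    have h1 : ((((q k)⁻¹ : ℝ) : ℂ) * ((q k : ℂ) * t)).re = t.re := by
      rw [← mul_assoc, ← Complex.ofReal_mul, inv_mul_cancel₀ (ne_of_gt hk)]
      simp
    rw [h1]
    have h2 : ((((q k)⁻¹ : ℝ) : ℂ) * dotProduct (star (w k)) ((H * H).mulVec (w k))).re
        = (q k)⁻¹ * (dotProduct (star (w k)) ((H * H).mulVec (w k))).re := by
      simp [Complex.mul_re]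
    rw [h2, mul_sub, ← mul_assoc, mul_inv_cancel₀ (ne_of_gt hk), one_mul]
  have hsum : ∑ k ∈ Finset.univ.filter (fun k => 0 < q k),
      q k * pureVar H ((((Real.sqrt (q k))⁻¹ : ℝ) : ℂ) • w k) =
      ∑ k, ((dotProduct (star (w k)) ((H * H).mulVec (w k))).re - q k * (t.re) ^ 2) := by
    rw [Finset.sum_congr rfl (fun k hk => hterm k (Finset.mem_filter.mp hk).2)]
    apply Finset.sum_subset (Finset.subset_univ _)
    intro k _ hk
    have hq0' : q k = 0 := by
      rcases lt_or_eq_of_le (hq0 k) with h | h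
      · exact absurd (Finset.mem_filter.mpr ⟨Finset.mem_univ k, h⟩) hk
      · exact h.symm
    rw [hq0', hwzero k hq0']
    simp
  rw [hsum, Finset.sum_sub_distrib]
  have hA : ∑ k, (dotProduct (star (w k)) ((H * H).mulVec (w k))).re
      = (ρ * H * H).trace.re := by
    rw [← Complex.re_sum]
    congr 1
    calc ∑ k, dotProduct (star (w k)) ((H * H).mulVec (w k))
        = ∑ k, dotProduct (star (u k)) ((S * (H * H) * S).mulVec (u k)) := by
          exact Finset.sum_congr rfl (fun k _ => key (H * H) k)
      _ = (S * (H * H) * S).trace := htrace _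
      _ = (ρ * H * H).trace := by
          rw [Matrix.trace_mul_cycle, ← Matrix.mul_assoc, hsq, Matrix.mul_assoc]
  have hB : ∑ k, q k * (t.re) ^ 2 = (t.re) ^ 2 := by
    rw [← Finset.sum_mul]
    have : ∑ k, q k = 1 := by
      have := htrace ρ
      have h1 : ∑ k, q k = (∑ k, dotProduct (star (u k)) (ρ.mulVec (u k))).re := by
        rw [Complex.re_sum]
        exact Finset.sum_congr rfl (fun k _ => hq k)
      rw [h1, this, htr]; simp
    rw [this, one_mul]
  rw [hA, hB]
end

section
/- Let d ≥ 1, let ρ be a d×d complex positive semidefinite matrix with tr ρ = 1 and eigenvalues p_1, …, p_d, and let H_1, …, H_{d²−1} be d×d Hermitian matrices satisfying tr H_i = 0 and tr(H_i H_j) = δ_{ij} for all i, j. Then Σ_{i=1}^{d²−1} (tr(ρH_i²) − tr(ρH_i)²) = d − tr(ρ²) = (d − 1) + Σ_{i≠j} p_i p_j. -/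
open scoped ComplexOrder

open Matrix in
private lemma stmt9_trace_mul_std {d : ℕ} (M : Matrix (Fin d) (Fin d) ℂ) (y x : Fin d) :
    (M * Matrix.single y x 1).trace = M x y := by
  classical
  simp [Matrix.trace, Matrix.diag, Matrix.mul_apply, Matrix.single,
    Finset.sum_ite_eq, Finset.sum_ite_eq', ite_and, eq_comm]

open Matrix in
private lemma stmt9_tr_real {d : ℕ} (A B : Matrix (Fin d) (Fin d) ℂ)
    (hA : A.IsHermitian) (hB : B.IsHermitian) : ((A * B).trace).im = 0 := by
  have h1 : (starRingEnd ℂ) ((A * B).trace) = (A * B).trace := by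
    have : ((A * B)ᴴ).trace = star ((A*B).trace) := Matrix.trace_conjTranspose _
    rw [Matrix.conjTranspose_mul, hA.eq, hB.eq, Matrix.trace_mul_comm] at this
    exact this.symm
  exact Complex.conj_eq_iff_im.mp h1

section Aux
open Matrix
variable {d : ℕ} {ι : Type*} [Fintype ι] [DecidableEq ι] [Nonempty ι]
 (G : ι → Matrix (Fin d) (Fin d) ℂ)
 (hGON : ∀ k l, (G k * G l).trace = if k = l then 1 else 0)
 (hcard : Fintype.card ι = d ^ 2)

include hGON hcard in
private lemma stmt9_rep (A : Matrix (Fin d) (Fin d) ℂ) :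
    A = ∑ k, ((G k * A).trace) • G k := by
  classical
  have hli : LinearIndependent ℂ G := by
    rw [Fintype.linearIndependent_iff]
    intro g hg j
    have h0 : ((G j) * (∑ k, g k • G k)).trace = 0 := by
      rw [hg, Matrix.mul_zero, Matrix.trace_zero]
    rw [Matrix.mul_sum, Matrix.trace_sum] at h0
    simpa [Matrix.mul_smul, Matrix.trace_smul, hGON, Finset.sum_ite_eq'] using h0
  have hcard' : Fintype.card ι = Module.finrank ℂ (Matrix (Fin d) (Fin d) ℂ) := by
    rw [Module.finrank_matrix, Module.finrank_self, Fintype.card_fin, hcard, sq, mul_one]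
  let b := basisOfLinearIndependentOfCardEqFinrank hli hcard'
  have hb : ∀ k, b k = G k :=
    fun k => congrFun (coe_basisOfLinearIndependentOfCardEqFinrank hli hcard') k
  have hcoef : ∀ j, (G j * A).trace = b.repr A j := by
    intro j
    conv_lhs => rw [← b.sum_repr A]
    simp only [hb]
    rw [Matrix.mul_sum, Matrix.trace_sum]
    simp [Matrix.mul_smul, Matrix.trace_smul, hGON, Finset.sum_ite_eq']
  conv_lhs => rw [← b.sum_repr A]
  refine Finset.sum_congr rfl fun k _ => ?_
  rw [hcoef k, hb]

include hGON hcard in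
private lemma stmt9_comp (x y c e : Fin d) : (∑ k, (G k) x y * (G k) c e) =
    (if y = c then (1:ℂ) else 0) * (if x = e then 1 else 0) := by
  classical
  have h := stmt9_rep G hGON hcard (Matrix.single y x 1)
  have h2 := congrFun (congrFun h c) e
  simp only [Matrix.sum_apply, Matrix.smul_apply, stmt9_trace_mul_std, smul_eq_mul] at h2
  rw [← h2]
  simp only [Matrix.single, Matrix.of_apply, ite_and]
  split_ifs <;> simp

include hGON hcard in
private lemma stmt9_sum_sq (hd : 1 ≤ d) :
    (∑ k, G k * G k) = (d : ℂ) • (1 : Matrix (Fin d) (Fin d) ℂ) := by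
  classical
  ext b a
  simp only [Matrix.sum_apply, Matrix.mul_apply]
  rw [Finset.sum_comm]
  simp only [stmt9_comp G hGON hcard]
  by_cases hba : b = a <;>
    simp [hba, Matrix.one_apply, Finset.card_univ, mul_comm]

end Aux

/-- For a density matrix `ρ` on `ℂ^d` (`d ≥ 1`) with eigenvalues `p i`,
and an orthonormal set of `d² − 1` traceless Hermitian generators `H i`, the total
variance `Σ_i Var[ρ, H i]` equals `d − tr(ρ²)`, which in turn equals
`(d − 1) + Σ_{i ≠ j} p i * p j`. -/
theorem stmt9 (d : ℕ) (hd : 1 ≤ d) (ρ : Matrix (Fin d) (Fin d) ℂ)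
    (hρ : ρ.PosSemidef) (htr : ρ.trace = 1)
    (H : Fin (d ^ 2 - 1) → Matrix (Fin d) (Fin d) ℂ)
    (hHerm : ∀ i, (H i).IsHermitian)
    (htr0 : ∀ i, (H i).trace = 0)
    (hON : ∀ i j, (H i * H j).trace = if i = j then 1 else 0) :
    (∑ i, ((ρ * (H i * H i)).trace.re - ((ρ * H i).trace.re) ^ 2) =
      (d : ℝ) - (ρ * ρ).trace.re) ∧
    ((d : ℝ) - (ρ * ρ).trace.re =
      ((d : ℝ) - 1) + ∑ i, ∑ j,
        if i ≠ j then hρ.1.eigenvalues i * hρ.1.eigenvalues j else 0) := by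
  classical
  have hd0 : 0 < d := hd
  have hdR : (0:ℝ) < (d:ℝ) := by exact_mod_cast hd0
  have hdC : (d : ℂ) ≠ 0 := Nat.cast_ne_zero.mpr hd0.ne'
  have hsR : (0:ℝ) < Real.sqrt d := Real.sqrt_pos.mpr hdR
  set s : ℂ := ((Real.sqrt d : ℝ) : ℂ) with hs
  have hs0 : s ≠ 0 := by
    simpa [hs] using Complex.ofReal_ne_zero.mpr hsR.ne'
  have hss : s * s = (d : ℂ) := by
    rw [hs, ← Complex.ofReal_mul, Real.mul_self_sqrt (le_of_lt hdR)]
    simp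
  set G : Option (Fin (d ^ 2 - 1)) → Matrix (Fin d) (Fin d) ℂ :=
    fun k => Option.elim k (s⁻¹ • 1) H with hG
  have htr1 : (1 : Matrix (Fin d) (Fin d) ℂ).trace = (d:ℂ) := by
    simp [Matrix.trace_one]
  have hGnn : G none * G none = (d : ℂ)⁻¹ • (1 : Matrix (Fin d) (Fin d) ℂ) := by
    simp only [hG, Option.elim]
    rw [Matrix.smul_mul, Matrix.mul_smul, Matrix.one_mul, smul_smul, ← mul_inv, hss]
  have hGON : ∀ k l, (G k * G l).trace = if k = l then 1 else 0 := by
    rintro (_|i) (_|j)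
    · rw [hGnn]
      simp [Matrix.trace_smul, htr1, inv_mul_cancel₀ hdC]
    · simp [hG, Matrix.smul_mul, Matrix.trace_smul, htr0]
    · simp [hG, Matrix.mul_smul, Matrix.trace_smul, htr0]
    · simpa [hG] using hON i j
  have hcard : Fintype.card (Option (Fin (d ^ 2 - 1))) = d ^ 2 := by
    have h1 : 1 ≤ d ^ 2 := Nat.one_le_pow _ _ hd0
    simp [Fintype.card_option, Nat.sub_add_cancel h1]
  -- complex key identities
  have hT := stmt9_sum_sq G hGON hcard hd
  rw [Fintype.sum_option, hGnn] at hT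
  have hsumH : (∑ i, H i * H i) =
      ((d:ℂ) - (d:ℂ)⁻¹) • (1 : Matrix (Fin d) (Fin d) ℂ) := by
    have : (∑ i, G (some i) * G (some i)) =
        (d : ℂ) • (1 : Matrix (Fin d) (Fin d) ℂ) - (d : ℂ)⁻¹ • 1 := by
      rw [eq_sub_iff_add_eq, add_comm]; exact hT
    simpa [hG, sub_smul] using this
  have hE1 : (∑ i, (ρ * (H i * H i)).trace) = (d:ℂ) - (d:ℂ)⁻¹ := by
    rw [← Matrix.trace_sum, ← Matrix.mul_sum, hsumH]
    rw [Matrix.mul_smul, Matrix.trace_smul, Matrix.mul_one, htr]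
    simp
  have hE2 : (ρ * ρ).trace = (d:ℂ)⁻¹ + ∑ i, ((ρ * H i).trace)^2 := by
    have hrw := congrArg (fun M => (ρ * M).trace) (stmt9_rep G hGON hcard ρ)
    rw [hrw, Matrix.mul_sum, Matrix.trace_sum, Fintype.sum_option]
    congr 1
    · show (ρ * (((s⁻¹ • (1 : Matrix (Fin d) (Fin d) ℂ)) * ρ).trace •
        (s⁻¹ • (1 : Matrix (Fin d) (Fin d) ℂ)))).trace = (d:ℂ)⁻¹
      rw [Matrix.smul_mul, Matrix.one_mul, Matrix.trace_smul, htr, smul_eq_mul, mul_one,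
        smul_smul, Matrix.mul_smul, Matrix.mul_one, Matrix.trace_smul, htr, smul_eq_mul,
        mul_one, ← mul_inv, hss]
    · refine Finset.sum_congr rfl fun i _ => ?_
      show (ρ * (((H i) * ρ).trace • H i)).trace = ((ρ * H i).trace)^2
      rw [Matrix.mul_smul, Matrix.trace_smul, smul_eq_mul, Matrix.trace_mul_comm (H i) ρ, sq]
  have hE3 : ∀ i, ((ρ * H i).trace).im = 0 := fun i => stmt9_tr_real ρ (H i) hρ.1 (hHerm i)
  -- part 1
  have part1 : (∑ i, ((ρ * (H i * H i)).trace.re - ((ρ * H i).trace.re) ^ 2) =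
      (d : ℝ) - (ρ * ρ).trace.re) := by
    have h1 : (∑ i, (ρ * (H i * H i)).trace.re) = (d:ℝ) - (d:ℝ)⁻¹ := by
      have := congrArg Complex.re hE1
      simpa [Complex.re_sum] using this
    have h2 : (ρ * ρ).trace.re = (d:ℝ)⁻¹ + ∑ i, ((ρ * H i).trace.re)^2 := by
      have := congrArg Complex.re hE2
      rw [this, Complex.add_re, Complex.re_sum]
      congr 1
      · simp
      · refine Finset.sum_congr rfl fun i _ => ?_
        have h3 := hE3 i
        rw [sq, sq, Complex.mul_re, h3]
        ring
    rw [Finset.sum_sub_distrib, h1, h2]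
    ring
  refine ⟨part1, ?_⟩
  -- part 2
  set p : Fin d → ℝ := hρ.1.eigenvalues with hp
  set U : Matrix (Fin d) (Fin d) ℂ := (hρ.1.eigenvectorUnitary : Matrix (Fin d) (Fin d) ℂ)
    with hUdef
  set D : Matrix (Fin d) (Fin d) ℂ := Matrix.diagonal (RCLike.ofReal ∘ p) with hD
  have hU : star U * U = 1 := Unitary.coe_star_mul_self (hρ.1.eigenvectorUnitary)
  have hspec : ρ = U * D * star U := hρ.1.spectral_theorem
  have htrsum : ∑ i, p i = 1 := by
    have h1 : ρ.trace = D.trace := by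
      rw [hspec, Matrix.trace_mul_cycle, hU, Matrix.one_mul]
    rw [htr, hD, Matrix.trace_diagonal] at h1
    have h2 : ((∑ i, p i : ℝ) : ℂ) = 1 := by
      push_cast [Function.comp] at h1 ⊢
      exact h1.symm
    exact_mod_cast h2
  have hρρ : (ρ * ρ).trace.re = ∑ i, (p i)^2 := by
    have h1 : (ρ * ρ).trace = ∑ i, ((p i : ℝ) : ℂ)^2 := by
      rw [hspec]
      have e1 : (U * D * star U) * (U * D * star U)
          = U * (D * ((star U * U) * (D * star U))) := by
        simp only [Matrix.mul_assoc]
      rw [e1, hU, Matrix.one_mul, Matrix.trace_mul_comm,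
        show (D * (D * star U)) * U = D * (D * (star U * U)) from by
          simp only [Matrix.mul_assoc],
        hU, Matrix.mul_one, Matrix.diagonal_mul_diagonal, Matrix.trace_diagonal]
      push_cast [Function.comp, sq]
      norm_num
    rw [h1, Complex.re_sum]
    refine Finset.sum_congr rfl fun i _ => ?_
    norm_cast
  have hk : ∀ i, (∑ j, (if i ≠ j then p i * p j else 0))
      = p i * (∑ j, p j) - p i * p i := by
    intro i
    have h : ∀ j, (if i ≠ j then p i * p j else 0)
        = p i * p j - (if i = j then p i * p j else 0) := by
      intro j; by_cases h : i = j <;> simp [h]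
    rw [Finset.sum_congr rfl (fun j _ => h j), Finset.sum_sub_distrib, Finset.mul_sum]
    simp [Finset.sum_ite_eq]
  have hkk : (∑ i, ∑ j, (if i ≠ j then p i * p j else 0)) = 1 - ∑ i, (p i)^2 := by
    rw [Finset.sum_congr rfl (fun i _ => hk i), Finset.sum_sub_distrib, htrsum]
    simp [sq, ← Finset.sum_sub_distrib, htrsum]
  rw [hρρ, hkk]
  ring
end

section
/- Let d ≥ 1, let ψ ∈ ℂ^d be a unit vector, let 0 < p < 1, and set ρ := p |ψ⟩⟨ψ| + ((1−p)/d) I. Let {|ψ_i⟩}_{i=1}^d be any orthonormal basis of ℂ^d with ψ_1 = ψ (so the ψ_i are eigenvectors of ρ with eigenvalues λ_1 = p + (1−p)/d and λ_i = (1−p)/d for i ≥ 2). Then for every d×d Hermitian matrix H, 2 Σ_{i,j=1}^d ((λ_i − λ_j)² / (λ_i + λ_j)) |⟨ψ_i|H|ψ_j⟩|² = (4p² / (p + 2(1−p)/d)) · (⟨ψ|H²|ψ⟩ − ⟨ψ|H|ψ⟩²). -/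
open Matrix


/-- For `ρ = p|ψ⟩⟨ψ| + ((1−p)/d) I` (`0 < p < 1`, `ψ` a unit vector),
an orthonormal basis `v` with `v 0 = ψ` (eigenvectors of `ρ`, with eigenvalues
`λ 0 = p + (1−p)/d` and `λ i = (1−p)/d` for `i ≠ 0`), and any Hermitian `H`, the quantum
Fisher information formula gives
`2 Σ_{i,j} ((λ i − λ j)²/(λ i + λ j)) |⟨v i|H|v j⟩|² = (4p²/(p + 2(1−p)/d)) Var[ψ,H]`. -/
theorem stmt10 (d : ℕ) (hd : 1 ≤ d) (ψ : Fin d → ℂ)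
    (hψ : dotProduct (star ψ) ψ = 1)
    (p : ℝ) (hp0 : 0 < p) (hp1 : p < 1)
    (ρ : Matrix (Fin d) (Fin d) ℂ)
    (hρ : ρ = (p : ℂ) • Matrix.vecMulVec ψ (star ψ) + (((1 - p) / d : ℝ) : ℂ) • 1)
    (v : Fin d → Fin d → ℂ)
    (hortho : ∀ i j, dotProduct (star (v i)) (v j) = if i = j then 1 else 0)
    (hv0 : v ⟨0, by omega⟩ = ψ)
    (lam : Fin d → ℝ)
    (hlam : lam = fun i => if i = ⟨0, by omega⟩ then p + (1 - p) / d else (1 - p) / d)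
    (H : Matrix (Fin d) (Fin d) ℂ) (hH : H.IsHermitian) :
    2 * ∑ i, ∑ j, ((lam i - lam j) ^ 2 / (lam i + lam j)) *
        ‖dotProduct (star (v i)) (H.mulVec (v j))‖ ^ 2 =
      (4 * p ^ 2 / (p + 2 * (1 - p) / d)) *
        ((dotProduct (star ψ) ((H * H).mulVec ψ)).re -
          ((dotProduct (star ψ) (H.mulVec ψ)).re) ^ 2) := by
  set z : Fin d := ⟨0, by omega⟩ with hz
  -- conjugation symmetry of matrix elements
  have hconj : ∀ a b : Fin d → ℂ,
      star (dotProduct (star a) (H.mulVec b))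
        = dotProduct (star b) (H.mulVec a) := by
    intro a b
    rw [← Matrix.star_dotProduct_star, star_star, Matrix.star_mulVec, hH.eq,
      ← Matrix.dotProduct_mulVec]
  -- completeness relation
  set A : Matrix (Fin d) (Fin d) ℂ := Matrix.of (fun k j => v j k) with hA
  have h1 : Aᴴ * A = 1 := by
    ext i j
    have := hortho i j
    simpa [Matrix.mul_apply, Matrix.conjTranspose_apply, hA, Matrix.one_apply,
      dotProduct] using this
  have h2 : A * Aᴴ = 1 := mul_eq_one_comm.mp h1
  -- the key sum: ∑_j |⟨ψ|H|v j⟩|² = ⟨ψ|H²|ψ⟩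
  set w : Fin d → ℂ := Matrix.vecMul (star ψ) H with hw
  have hAzj : ∀ j, dotProduct (star ψ) (H.mulVec (v j)) = Matrix.vecMul w A j := by
    intro j
    rw [Matrix.dotProduct_mulVec]
    simp [Matrix.vecMul, dotProduct, hA, hw]
  have hsumC : ∑ j, (dotProduct (star ψ) (H.mulVec (v j))) *
      star (dotProduct (star ψ) (H.mulVec (v j)))
      = dotProduct (star ψ) ((H * H).mulVec ψ) := by
    have e1 : ∑ j, (dotProduct (star ψ) (H.mulVec (v j))) *
        star (dotProduct (star ψ) (H.mulVec (v j)))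
        = dotProduct (Matrix.vecMul w A) (star (Matrix.vecMul w A)) := by
      rw [dotProduct]
      exact Finset.sum_congr rfl fun j _ => by rw [hAzj]; rfl
    rw [e1, Matrix.star_vecMul, ← Matrix.dotProduct_mulVec, Matrix.mulVec_mulVec, h2,
      Matrix.one_mulVec]
    have hstw : star w = H.mulVec ψ := by
      rw [hw, Matrix.star_vecMul, hH.eq, star_star]
    rw [hstw, hw, ← Matrix.dotProduct_mulVec, Matrix.mulVec_mulVec]
  -- real quantities
  set S : ℝ := (dotProduct (star ψ) ((H * H).mulVec ψ)).re with hS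
  set r : ℝ := (dotProduct (star ψ) (H.mulVec ψ)).re with hr
  set g : Fin d → ℝ := fun j =>
    ‖dotProduct (star ψ) (H.mulVec (v j))‖ ^ 2 with hg
  have habs2 : ∀ x : ℂ, ((‖x‖ : ℝ) : ℂ) ^ 2 = x * star x := by
    intro x
    rw [← Complex.ofReal_pow, Complex.sq_norm, ← Complex.mul_conj]
    rfl
  have hgS : ∑ j, g j = S := by
    have hcast : ((∑ j, g j : ℝ) : ℂ) = dotProduct (star ψ) ((H * H).mulVec ψ) := by
      push_cast
      rw [← hsumC]
      exact Finset.sum_congr rfl fun j _ => by simp only [hg]; push_cast; exact habs2 _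
    calc ∑ j, g j = (((∑ j, g j : ℝ) : ℂ)).re := by simp
    _ = S := by rw [hcast]
  -- ⟨ψ|H|ψ⟩ is real
  have hAzzreal : dotProduct (star ψ) (H.mulVec ψ) = (r : ℂ) := by
    have hsa : (starRingEnd ℂ) (dotProduct (star ψ) (H.mulVec ψ))
        = dotProduct (star ψ) (H.mulVec ψ) := hconj ψ ψ
    exact (Complex.conj_eq_iff_re.mp hsa).symm
  have hgz : g z = r ^ 2 := by
    simp only [hg, hv0]
    rw [hAzzreal, Complex.norm_real, Real.norm_eq_abs, sq_abs]
  -- abs symmetry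
  have habs : ∀ i j, ‖dotProduct (star (v i)) (H.mulVec (v j))‖
      = ‖dotProduct (star (v j)) (H.mulVec (v i))‖ := by
    intro i j
    rw [← hconj (v j) (v i)]
    exact Complex.norm_conj _
  -- the coefficient
  set C : ℝ := p ^ 2 / (p + 2 * (1 - p) / d) with hC
  -- termwise identity
  have hterm : ∀ i j, ((lam i - lam j) ^ 2 / (lam i + lam j)) *
      ‖dotProduct (star (v i)) (H.mulVec (v j))‖ ^ 2
      = (if i = z then (if j = z then 0 else C * g j) else 0)
        + (if j = z then (if i = z then 0 else C * g i) else 0) := by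
    intro i j
    simp only [hlam]
    by_cases hi : i = z <;> by_cases hj : j = z
    · rw [hi, hj]; simp
    · rw [hi]
      simp only [if_pos rfl, if_neg hj, if_true]
      rw [show p + (1 - p) / (d:ℝ) - (1 - p) / (d:ℝ) = p from by ring,
        show p + (1 - p) / (d:ℝ) + (1 - p) / (d:ℝ) = p + 2 * (1 - p) / (d:ℝ) from by ring,
        hv0]
      simp only [hC, hg, add_zero]
    · rw [hj]
      simp only [if_pos rfl, if_neg hi, if_true]
      rw [show (1 - p) / (d:ℝ) - (p + (1 - p) / (d:ℝ)) = -p from by ring,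
        show (1 - p) / (d:ℝ) + (p + (1 - p) / (d:ℝ)) = p + 2 * (1 - p) / (d:ℝ) from by ring,
        habs i z, hv0]
      simp only [hC, hg, zero_add]
      ring
    · simp [hi, hj]
  -- summing helpers
  have hsum1 : ∀ (h : Fin d → ℝ), ∑ j, (if j = z then (0:ℝ) else h j) = (∑ j, h j) - h z := by
    intro h
    have e : ∀ j, (if j = z then (0:ℝ) else h j) = h j - (if j = z then h j else 0) := by
      intro j; split <;> simp [*]
    rw [Finset.sum_congr rfl (fun j _ => e j), Finset.sum_sub_distrib,
      Finset.sum_ite_eq' Finset.univ z h]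
    simp
  have hT1 : ∑ i, ∑ j, (if i = z then (if j = z then (0:ℝ) else C * g j) else 0)
      = C * (S - r ^ 2) := by
    have inner : ∀ i : Fin d, ∑ j, (if i = z then (if j = z then (0:ℝ) else C * g j) else 0)
        = if i = z then C * (∑ j, g j) - C * g z else 0 := by
      intro i
      by_cases hi : i = z
      · simp only [hi, eq_self_iff_true, if_true]
        rw [hsum1 (fun j => C * g j), ← Finset.mul_sum]
      · simp [hi]
    rw [Finset.sum_congr rfl (fun i _ => inner i),
      Finset.sum_ite_eq' Finset.univ z (fun _ => C * (∑ j, g j) - C * g z)]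
    simp only [Finset.mem_univ, if_true, hgS, hgz]
    ring
  have hT2 : ∑ i, ∑ j, (if j = z then (if i = z then (0:ℝ) else C * g i) else 0)
      = C * (S - r ^ 2) := by
    rw [Finset.sum_comm]
    have inner : ∀ j : Fin d, ∑ i, (if j = z then (if i = z then (0:ℝ) else C * g i) else 0)
        = if j = z then C * (∑ i, g i) - C * g z else 0 := by
      intro j
      by_cases hj : j = z
      · simp only [hj, eq_self_iff_true, if_true]
        rw [hsum1 (fun i => C * g i), ← Finset.mul_sum]
      · simp [hj]
    rw [Finset.sum_congr rfl (fun j _ => inner j),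
      Finset.sum_ite_eq' Finset.univ z (fun _ => C * (∑ i, g i) - C * g z)]
    simp only [Finset.mem_univ, if_true, hgS, hgz]
    ring
  calc 2 * ∑ i, ∑ j, ((lam i - lam j) ^ 2 / (lam i + lam j)) *
        ‖dotProduct (star (v i)) (H.mulVec (v j))‖ ^ 2
      = 2 * ∑ i, ∑ j, ((if i = z then (if j = z then (0:ℝ) else C * g j) else 0)
        + (if j = z then (if i = z then 0 else C * g i) else 0)) := by
        congr 1
        exact Finset.sum_congr rfl fun i _ => Finset.sum_congr rfl fun j _ => hterm i j
    _ = 2 * ((∑ i, ∑ j, (if i = z then (if j = z then (0:ℝ) else C * g j) else 0))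
        + (∑ i, ∑ j, (if j = z then (if i = z then (0:ℝ) else C * g i) else 0))) := by
        rw [← Finset.sum_add_distrib]
        congr 1
        exact Finset.sum_congr rfl fun i _ => Finset.sum_add_distrib
    _ = 2 * (C * (S - r ^ 2) + C * (S - r ^ 2)) := by rw [hT1, hT2]
    _ = (4 * p ^ 2 / (p + 2 * (1 - p) / d)) * (S - r ^ 2) := by
        rw [hC]; ring
end

section
/- Let ρ be a 2×2 complex positive semidefinite matrix with tr ρ = 1, with orthonormal eigenbasis {|1⟩, |2⟩} and eigenvalues p_1, p_2 (so p_1 + p_2 = 1). Let H be a 2×2 Hermitian matrix with tr H = 0 and tr(H²) = 2, and write H_{ij} = ⟨i|H|j⟩. Then 8 Σ_{i≠j} (p_i p_j / (p_i + p_j)) |H_{ij}|² + 4 (Σ_i p_i H_{ii}² − (Σ_i p_i H_{ii})²) = 8 (1 − tr(ρ²)). In particular the left-hand side is independent of the choice of the traceless unit-norm Hermitian H. -/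
open scoped ComplexOrder
open Matrix in

/-- For a qubit density matrix `ρ = Σ_i p i |v i⟩⟨v i|` (positive
semidefinite, trace one, orthonormal eigenbasis `v`, eigenvalues `p` with
`p 0 + p 1 = 1`) and a traceless Hermitian `H` with `tr H² = 2`, the gap
`4 Var[ρ,H] − F_Q[ρ,H]`, written in terms of the matrix elements `H_{ij} = ⟨v i|H|v j⟩`,
equals `8 (1 − tr ρ²)`, independently of the choice of `H`. -/
theorem stmt11 (ρ H : Matrix (Fin 2) (Fin 2) ℂ) (p : Fin 2 → ℝ) (v : Fin 2 → Fin 2 → ℂ)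
    (hρ : ρ.PosSemidef) (htrρ : ρ.trace = 1)
    (hortho : ∀ i j, dotProduct (star (v i)) (v j) = if i = j then 1 else 0)
    (hspec : ρ = ∑ i, (p i : ℂ) • Matrix.vecMulVec (v i) (star (v i)))
    (hp : p 0 + p 1 = 1)
    (hH : H.IsHermitian) (htrH : H.trace = 0) (htrH2 : (H * H).trace = 2) :
    8 * (∑ i, ∑ j,
        if i ≠ j then
          p i * p j / (p i + p j) *
            (‖dotProduct (star (v i)) (H.mulVec (v j))‖) ^ 2
        else 0) +
      4 * ((∑ i, p i * ((dotProduct (star (v i)) (H.mulVec (v i))).re) ^ 2) -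
        (∑ i, p i * (dotProduct (star (v i)) (H.mulVec (v i))).re) ^ 2) =
    8 * (1 - (ρ * ρ).trace.re) := by
  classical
  set U : Matrix (Fin 2) (Fin 2) ℂ := Matrix.of (fun i j => v j i) with hUdef
  have hUU : Uᴴ * U = 1 := by
    ext i j
    have := hortho i j
    simpa [Matrix.mul_apply, Matrix.conjTranspose_apply, Matrix.one_apply, hUdef,
      dotProduct] using this
  have hUU' : U * Uᴴ = 1 := mul_eq_one_comm.mp hUU
  set M : Matrix (Fin 2) (Fin 2) ℂ := Uᴴ * H * U with hMdef
  have hM : ∀ i j, dotProduct (star (v i)) (H.mulVec (v j)) = M i j := by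
    intro i j
    simp only [hMdef, Matrix.mul_apply, Matrix.conjTranspose_apply, hUdef, Matrix.of_apply,
      dotProduct, Matrix.mulVec, Pi.star_apply, Finset.sum_mul, Finset.mul_sum]
    rw [Finset.sum_comm]
    refine Finset.sum_congr rfl fun k _ => Finset.sum_congr rfl fun l _ => by ring
  set D : Matrix (Fin 2) (Fin 2) ℂ := Matrix.diagonal (fun i => (p i : ℂ)) with hDdef
  have hρU : ρ = U * D * Uᴴ := by
    rw [hspec]
    ext i j
    simp [Matrix.mul_apply, hDdef, Matrix.diagonal, hUdef, Matrix.vecMulVec,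
      Fin.sum_univ_two, Matrix.sum_apply]
    ring
  have htr2 : ((ρ * ρ).trace : ℂ) = ((p 0)^2 + (p 1)^2 : ℝ) := by
    have h1 : ρ * ρ = U * (D * D) * Uᴴ := by
      rw [hρU]
      calc U * D * Uᴴ * (U * D * Uᴴ) = U * D * (Uᴴ * U) * D * Uᴴ := by
            simp [Matrix.mul_assoc]
        _ = U * (D * D) * Uᴴ := by simp [hUU, Matrix.mul_assoc]
    rw [h1, Matrix.trace_mul_cycle, ← Matrix.mul_assoc, hUU, Matrix.one_mul, hDdef,
      Matrix.diagonal_mul_diagonal, Matrix.trace_diagonal]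
    simp [Fin.sum_univ_two]
    ring
  have htrre : (ρ * ρ).trace.re = (p 0)^2 + (p 1)^2 := by rw [htr2, Complex.ofReal_re]
  have hMher : M.IsHermitian := by
    unfold Matrix.IsHermitian
    simp [hMdef, Matrix.conjTranspose_mul, Matrix.mul_assoc, hH.eq]
  have hMtr : M.trace = 0 := by
    rw [hMdef, Matrix.trace_mul_cycle, hUU', Matrix.one_mul, htrH]
  have hMtr2 : (M * M).trace = 2 := by
    have h1 : M * M = Uᴴ * (H * H) * U := by
      calc Uᴴ * H * U * (Uᴴ * H * U) = Uᴴ * H * (U * Uᴴ) * H * U := by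
            simp [Matrix.mul_assoc]
        _ = Uᴴ * (H * H) * U := by simp [hUU', Matrix.mul_assoc]
    rw [hMdef, h1, Matrix.trace_mul_cycle, hUU', Matrix.one_mul, htrH2]
  -- scalar facts
  have h00' : (starRingEnd ℂ) (M 0 0) = M 0 0 := by
    conv_lhs => rw [← hMher.eq]
    simp [Matrix.conjTranspose_apply]
  have h11' : (starRingEnd ℂ) (M 1 1) = M 1 1 := by
    conv_lhs => rw [← hMher.eq]
    simp [Matrix.conjTranspose_apply]
  have h00 : M 0 0 = ((M 0 0).re : ℂ) := (Complex.conj_eq_iff_re.mp h00').symm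
  have h11 : M 1 1 = ((M 1 1).re : ℂ) := (Complex.conj_eq_iff_re.mp h11').symm
  have h10 : M 1 0 = (starRingEnd ℂ) (M 0 1) := by
    conv_lhs => rw [← hMher.eq]
    simp [Matrix.conjTranspose_apply]
  set a := (M 0 0).re
  set b := (M 1 1).re
  set x := (M 0 1).re
  set y := (M 0 1).im
  have hab : a + b = 0 := by
    have : M 0 0 + M 1 1 = 0 := by
      simpa [Matrix.trace, Fin.sum_univ_two] using hMtr
    have := congrArg Complex.re this
    simpa using this
  have hsq : a^2 + b^2 + 2*(x^2 + y^2) = 2 := by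
    have h2 : M 0 0 * M 0 0 + M 0 1 * M 1 0 + (M 1 0 * M 0 1 + M 1 1 * M 1 1) = 2 := by
      simpa [Matrix.trace, Matrix.mul_apply, Fin.sum_univ_two] using hMtr2
    rw [h00, h11, h10] at h2
    have := congrArg Complex.re h2
    simp [Complex.mul_re, Complex.conj_re, Complex.conj_im] at this
    nlinarith [this]
  have habs01 : ‖M 0 1‖^2 = x^2 + y^2 := by
    rw [Complex.sq_norm, Complex.normSq_apply]; ring
  have habs10 : ‖M 1 0‖^2 = x^2 + y^2 := by
    rw [h10, Complex.norm_conj, Complex.sq_norm, Complex.normSq_apply]; ring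
  simp only [hM, htrre, Fin.sum_univ_two]
  norm_num [habs01, habs10]
  have hb : b = -a := by linarith
  have hb2 : b ^ 2 = a ^ 2 := by rw [hb]; ring
  have hs : x ^ 2 + y ^ 2 = 1 - a ^ 2 := by linarith
  have hB : (M 1 1).re = -(M 0 0).re := hb
  have hP : p 1 = 1 - p 0 := by linarith
  rw [hB, hP]
  have hA : (M 0 0).re = a := rfl
  rw [hA]
  linear_combination (16 * p 0 * (1 - p 0)) * hs
end

section
/- Let ρ be a d×d complex positive semidefinite matrix with tr ρ = 1, let φ ∈ ℂ^{d'} be a unit vector, and let H be a Hermitian matrix acting on ℂ^d ⊗ ℂ^{d'} (identified with dd'×dd' matrices via the Kronecker product). Define the compressed matrices H̃ := (I_d ⊗ ⟨φ|) H (I_d ⊗ |φ⟩) and K := (I_d ⊗ ⟨φ|) H² (I_d ⊗ |φ⟩), which are d×d and with H̃ Hermitian. Then Var[ρ ⊗ |φ⟩⟨φ|, H] = tr[ρ (K − H̃²)] + Var[ρ, H̃], where Var[σ, A] := tr(σA²) − tr(σA)². -/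
open scoped ComplexOrder Kronecker

/-- The compression `(I_d ⊗ ⟨φ|) A (I_d ⊗ |φ⟩)` of a matrix `A` on `ℂ^d ⊗ ℂ^{d'}`
by a vector `φ ∈ ℂ^{d'}`. -/
noncomputable def compress {d d' : ℕ} (φ : Fin d' → ℂ)
    (A : Matrix (Fin d × Fin d') (Fin d × Fin d') ℂ) : Matrix (Fin d) (Fin d) ℂ :=
  Matrix.of fun a b => ∑ x, ∑ y, star (φ x) * A (a, x) (b, y) * φ y

/-- The variance `Var[σ,A] = tr(σA²) − tr(σA)²` of an observable `A` in a state `σ`. -/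
noncomputable def mixVar {n : Type*} [Fintype n] (σ A : Matrix n n ℂ) : ℂ :=
  (σ * (A * A)).trace - ((σ * A).trace) ^ 2

lemma key {d d' : ℕ} (ρ : Matrix (Fin d) (Fin d) ℂ) (φ : Fin d' → ℂ)
    (A : Matrix (Fin d × Fin d') (Fin d × Fin d') ℂ) :
    ((ρ ⊗ₖ Matrix.vecMulVec φ (star φ)) * A).trace = (ρ * compress φ A).trace := by
  simp only [Matrix.trace, Matrix.diag, Matrix.mul_apply, compress, Matrix.of_apply,
    Matrix.kroneckerMap_apply, Matrix.vecMulVec_apply, Fintype.sum_prod_type,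
    Finset.mul_sum, Finset.sum_mul, Pi.star_apply]
  refine Finset.sum_congr rfl fun a _ => ?_
  rw [Finset.sum_comm]
  refine Finset.sum_congr rfl fun b _ => ?_
  rw [Finset.sum_comm]
  refine Finset.sum_congr rfl fun x _ => Finset.sum_congr rfl fun y _ => ?_
  ring

/-- For a density matrix `ρ` on `ℂ^d`, a unit vector `φ ∈ ℂ^{d'}`, a
Hermitian `H` on the tensor product, and the compressions `H̃ = (I⊗⟨φ|)H(I⊗|φ⟩)` and
`K = (I⊗⟨φ|)H²(I⊗|φ⟩)`, one has
`Var[ρ ⊗ |φ⟩⟨φ|, H] = tr[ρ(K − H̃²)] + Var[ρ, H̃]`. -/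
theorem stmt14 (d d' : ℕ) (ρ : Matrix (Fin d) (Fin d) ℂ)
    (hρ : ρ.PosSemidef) (htrρ : ρ.trace = 1)
    (φ : Fin d' → ℂ) (hφ : dotProduct (star φ) φ = 1)
    (H : Matrix (Fin d × Fin d') (Fin d × Fin d') ℂ) (hH : H.IsHermitian) :
    mixVar (ρ ⊗ₖ Matrix.vecMulVec φ (star φ)) H =
      (ρ * (compress φ (H * H) - compress φ H * compress φ H)).trace +
        mixVar ρ (compress φ H) := by
  simp only [mixVar, Matrix.mul_sub, Matrix.trace_sub]
  rw [key ρ φ (H * H), key ρ φ H]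
  ring
end
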